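/- As z → 2 from the right the following asymptotics hold, with C₁ = 1/√2: a(z) − C₁ (z−2)^{−1/2} = O((z−2)^{1/2}), b(z) − C₁ (z−2)^{−1/2} + 1 = O((z−2)^{1/2}), and c(z) − C₁ (z−2)^{−1/2} + 1 = O((z−2)^{1/2}) (big-O taken along the filter of right neighborhoods of 2). -/

import Mathlib

open MeasureTheory Real Filter Topology Asymptotics

/-- `a(z) = (1/2π)∫_{−π}^{π} dq/(z − 1 + cos q)`. -/
noncomputable def aF (z : ℝ) : ℝ :=
  (2 * Real.pi)⁻¹ * ∫ q in (-Real.pi)..Real.pi, (z - 1 + Real.cos q)⁻¹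

/-- `b(z) = −(1/2π)∫_{−π}^{π} cos q dq/(z − 1 + cos q)`. -/
noncomputable def bF (z : ℝ) : ℝ :=
  -((2 * Real.pi)⁻¹ * ∫ q in (-Real.pi)..Real.pi, Real.cos q / (z - 1 + Real.cos q))

/-- `c(z) = (1/2π)∫_{−π}^{π} cos² q dq/(z − 1 + cos q)`. -/
noncomputable def cF (z : ℝ) : ℝ :=
  (2 * Real.pi)⁻¹ * ∫ q in (-Real.pi)..Real.pi, (Real.cos q) ^ 2 / (z - 1 + Real.cos q)

/-- The Fredholm determinant `Δ(μ,λ;z) = (1 − μ a(z))(1 − λ c(z)) − μλ b(z)²`. -/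
noncomputable def Δdet (μ lam z : ℝ) : ℝ :=
  (1 - μ * aF z) * (1 - lam * cF z) - μ * lam * (bF z) ^ 2

section Aux

lemma deriv_aux (r : ℝ) (hr : 1 < r) (q : ℝ) (hq : q ∈ Set.Ico 0 π) :
    HasDerivAt (fun x => (2 / Real.sqrt (r^2-1)) *
      Real.arctan (Real.sqrt ((r-1)/(r+1)) * Real.tan (x/2))) ((r + Real.cos q)⁻¹) q := by
  set k := Real.sqrt ((r-1)/(r+1)) with hk
  set c := 2 / Real.sqrt (r^2-1) with hc
  have hr1 : (0:ℝ) < r - 1 := by linarith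
  have hr2 : (0:ℝ) < r + 1 := by linarith
  have hcosq : Real.cos (q/2) ≠ 0 := by
    apply Real.cos_ne_zero_iff.2
    intro n h
    rcases hq with ⟨h0, h1⟩
    have := Real.pi_pos
    rcases lt_trichotomy n 0 with hn | hn | hn
    · have hn' : (n:ℝ) ≤ -1 := by exact_mod_cast (by omega : n ≤ -1)
      nlinarith
    · simp [hn] at h; nlinarith
    · have : (1:ℝ) ≤ (n:ℝ) := by exact_mod_cast hn
      nlinarith
  have htan : HasDerivAt (fun x => Real.tan (x/2)) (1 / Real.cos (q/2)^2 * (1/2)) q := by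
    have h1 : HasDerivAt (fun x : ℝ => x/2) (1/2) q := (hasDerivAt_id q).div_const 2
    exact (Real.hasDerivAt_tan hcosq).comp q h1
  have harctan : HasDerivAt (fun x => Real.arctan (k * Real.tan (x/2)))
      (1 / (1 + (k * Real.tan (q/2))^2) * (k * (1 / Real.cos (q/2)^2 * (1/2)))) q :=
    (Real.hasDerivAt_arctan _).comp q (htan.const_mul k)
  have := harctan.const_mul c
  refine this.congr_deriv ?_
  symm
  have hk2 : k^2 = (r-1)/(r+1) := Real.sq_sqrt (by positivity)
  have hck : c * k = 2 / (r+1) := by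
    have h1 : Real.sqrt (r^2-1) = Real.sqrt (r-1) * Real.sqrt (r+1) := by
      rw [← Real.sqrt_mul hr1.le]; ring_nf
    have h2 : k = Real.sqrt (r-1) / Real.sqrt (r+1) := by
      rw [hk, Real.sqrt_div hr1.le]
    have e1 : Real.sqrt (r+1) ^ 2 = r+1 := Real.sq_sqrt hr2.le
    have p1 : Real.sqrt (r-1) > 0 := Real.sqrt_pos.2 hr1
    have p2 : Real.sqrt (r+1) > 0 := Real.sqrt_pos.2 hr2
    rw [hc, h1, h2]
    field_simp
    nlinarith [e1, p1, p2]
  have hcos : Real.cos q = 2 * Real.cos (q/2)^2 - 1 := by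
    have h := Real.cos_two_mul (q/2)
    rw [show 2*(q/2) = q by ring] at h
    exact h
  have hsin : Real.sin (q/2)^2 = 1 - Real.cos (q/2)^2 := by
    nlinarith [Real.sin_sq_add_cos_sq (q/2)]
  have hrc : r + Real.cos q > 0 := by nlinarith [Real.neg_one_le_cos q]
  rw [Real.tan_eq_sin_div_cos]
  have hk2' : k^2 * (r+1) = r - 1 := by field_simp at hk2 ⊢; linarith [hk2]
  have hck' : c * k * (r+1) = 2 := by field_simp at hck ⊢; linarith [hck]
  clear_value c k
  field_simp
  apply mul_left_cancel₀ (ne_of_gt hr2)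
  linear_combination (2*Real.sin (q/2)^2)*hk2' + (-(r+Real.cos q))*hck' + (2*(r-1))*hsin + (-2)*hcos

lemma pos_aux (r : ℝ) (hr : 1 < r) (q : ℝ) : 0 < r + Real.cos q := by
  nlinarith [Real.neg_one_le_cos q]

lemma cont_aux (r : ℝ) (hr : 1 < r) : Continuous fun q => (r + Real.cos q)⁻¹ := by
  apply Continuous.inv₀ (by continuity)
  exact fun q => ne_of_gt (pos_aux r hr q)

lemma half_integral (r : ℝ) (hr : 1 < r) :
    ∫ q in (0:ℝ)..π, (r + Real.cos q)⁻¹ = π / Real.sqrt (r^2-1) := by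
  set c := 2 / Real.sqrt (r^2-1) with hc
  set k := Real.sqrt ((r-1)/(r+1)) with hk
  have hr1 : (0:ℝ) < r - 1 := by linarith
  have hsq : 0 < Real.sqrt (r^2-1) := Real.sqrt_pos.2 (by nlinarith)
  have hkpos : 0 < k := Real.sqrt_pos.2 (by positivity)
  have hcont := cont_aux r hr
  have hint : ∀ a b : ℝ, IntervalIntegrable (fun q => (r + Real.cos q)⁻¹) volume a b :=
    fun a b => hcont.intervalIntegrable a b
  set G : ℝ → ℝ := fun b => ∫ q in (0:ℝ)..b, (r + Real.cos q)⁻¹ with hG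
  set F : ℝ → ℝ := fun b => c * Real.arctan (k * Real.tan (b/2)) with hF
  have hpi := Real.pi_pos
  have hGF : ∀ b ∈ Set.Ico (0:ℝ) π, G b = F b := by
    intro b hb
    have : G b = F b - F 0 := by
      apply intervalIntegral.integral_eq_sub_of_hasDerivAt
      · intro q hq
        apply deriv_aux r hr
        rcases hb with ⟨hb0, hb1⟩
        rw [Set.uIcc_of_le hb0] at hq
        exact ⟨hq.1, lt_of_le_of_lt hq.2 hb1⟩
      · exact hint 0 b
    simpa [hF, Real.tan_zero, Real.arctan_zero] using this
  have hFl : Tendsto F (𝓝[<] π) (𝓝 (c * (π/2))) := by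
    have h1 : Tendsto (fun b : ℝ => b/2) (𝓝[<] π) (𝓝[<] (π/2)) := by
      apply tendsto_nhdsWithin_of_tendsto_nhds_of_eventually_within
      · exact (tendsto_id.div_const 2).mono_left nhdsWithin_le_nhds
      · filter_upwards [self_mem_nhdsWithin] with b hb
        simp only [Set.mem_Iio] at hb ⊢; linarith
    have h2 : Tendsto (fun b : ℝ => Real.tan (b/2)) (𝓝[<] π) atTop :=
      Real.tendsto_tan_pi_div_two.comp h1
    have h3 : Tendsto (fun b : ℝ => k * Real.tan (b/2)) (𝓝[<] π) atTop :=
      h2.const_mul_atTop hkpos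
    have h4 : Tendsto (fun b : ℝ => Real.arctan (k * Real.tan (b/2))) (𝓝[<] π) (𝓝 (π/2)) :=
      (Real.tendsto_arctan_atTop.mono_right nhdsWithin_le_nhds).comp h3
    exact h4.const_mul c
  have hGl : Tendsto G (𝓝[<] π) (𝓝 (G π)) := by
    have : ContinuousAt G π := by
      have := intervalIntegral.continuous_primitive hint (0:ℝ)
      exact this.continuousAt
    exact this.continuousWithinAt.tendsto
  have heq : G π = c * (π/2) := by
    apply tendsto_nhds_unique ?_ hFl
    apply hGl.congr'
    filter_upwards [Ioo_mem_nhdsLT_of_mem (⟨by linarith, le_refl π⟩ : π ∈ Set.Ioc (π/2) π)] with b hb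
    exact hGF b ⟨by linarith [hb.1], hb.2⟩
  show G π = _
  rw [heq, hc]; field_simp

lemma full_integral (r : ℝ) (hr : 1 < r) :
    ∫ q in (-π)..π, (r + Real.cos q)⁻¹ = 2 * π / Real.sqrt (r^2-1) := by
  have hint : ∀ a b : ℝ, IntervalIntegrable (fun q => (r + Real.cos q)⁻¹) volume a b :=
    fun a b => (cont_aux r hr).intervalIntegrable a b
  have hsym : ∫ q in (-π)..(0:ℝ), (r + Real.cos q)⁻¹ = ∫ q in (0:ℝ)..π, (r + Real.cos q)⁻¹ := by
    have h := intervalIntegral.integral_comp_neg (a := (0:ℝ)) (b := π) (fun q => (r + Real.cos q)⁻¹)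
    simp only [Real.cos_neg, neg_zero] at h
    exact h.symm
  rw [← intervalIntegral.integral_add_adjacent_intervals (hint (-π) 0) (hint 0 π), hsym,
    half_integral r hr]
  ring

lemma cos_integral (r : ℝ) (hr : 1 < r) :
    ∫ q in (-π)..π, Real.cos q / (r + Real.cos q)
      = 2*π - r * (2 * π / Real.sqrt (r^2-1)) := by
  have hne : ∀ q : ℝ, r + Real.cos q ≠ 0 := fun q => ne_of_gt (pos_aux r hr q)
  have hcongr : ∀ q : ℝ, Real.cos q / (r + Real.cos q) = 1 - r * (r + Real.cos q)⁻¹ := by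
    intro q; field_simp [hne q]; ring
  simp_rw [hcongr]
  rw [intervalIntegral.integral_sub intervalIntegrable_const
    (((cont_aux r hr).intervalIntegrable _ _).const_mul r),
    intervalIntegral.integral_const_mul, full_integral r hr]
  simp; ring

lemma cossq_integral (r : ℝ) (hr : 1 < r) :
    ∫ q in (-π)..π, (Real.cos q)^2 / (r + Real.cos q)
      = r^2 * (2 * π / Real.sqrt (r^2-1)) - 2*π*r := by
  have hne : ∀ q : ℝ, r + Real.cos q ≠ 0 := fun q => ne_of_gt (pos_aux r hr q)
  have hcongr : ∀ q : ℝ, (Real.cos q)^2 / (r + Real.cos q)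
      = Real.cos q - r * (Real.cos q / (r + Real.cos q)) := by
    intro q; field_simp [hne q]; ring
  have hc2 : Continuous fun q => Real.cos q / (r + Real.cos q) :=
    Real.continuous_cos.div (by continuity) hne
  simp_rw [hcongr]
  rw [intervalIntegral.integral_sub (Real.continuous_cos.intervalIntegrable _ _)
    ((hc2.intervalIntegrable _ _).const_mul r),
    intervalIntegral.integral_const_mul, cos_integral r hr]
  simp [integral_cos]; ring

lemma sq_sub_eq (z : ℝ) : (z-1)^2 - 1 = z^2 - 2*z := by ring

lemma aF_eq (z : ℝ) (hz : 2 < z) : aF z = (Real.sqrt (z^2-2*z))⁻¹ := by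
  have hr : 1 < z - 1 := by linarith
  have h := full_integral (z-1) hr
  rw [aF, h, sq_sub_eq]
  have : Real.pi ≠ 0 := Real.pi_ne_zero
  field_simp

lemma bF_eq (z : ℝ) (hz : 2 < z) : bF z = (z-1) * (Real.sqrt (z^2-2*z))⁻¹ - 1 := by
  have hr : 1 < z - 1 := by linarith
  have h := cos_integral (z-1) hr
  rw [bF, h, sq_sub_eq]
  have hπ : Real.pi ≠ 0 := Real.pi_ne_zero
  have hs : Real.sqrt (z^2-2*z) ≠ 0 :=
    ne_of_gt (Real.sqrt_pos.2 (by nlinarith))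
  field_simp
  ring

lemma cF_eq (z : ℝ) (hz : 2 < z) : cF z = (z-1)^2 * (Real.sqrt (z^2-2*z))⁻¹ - (z-1) := by
  have hr : 1 < z - 1 := by linarith
  have h := cossq_integral (z-1) hr
  rw [cF, h, sq_sub_eq]
  have hπ : Real.pi ≠ 0 := Real.pi_ne_zero
  have hs : Real.sqrt (z^2-2*z) ≠ 0 :=
    ne_of_gt (Real.sqrt_pos.2 (by nlinarith))
  field_simp

lemma key (h : ℝ → ℝ) (hd : DifferentiableAt ℝ h 2) :
    (fun z => (z-2) ^ (-(1/2):ℝ) * (h z - h 2)) =O[𝓝[>] (2:ℝ)]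
      fun z => (z-2) ^ ((1/2):ℝ) := by
  have h1 : (fun z => h z - h 2) =O[𝓝[>] (2:ℝ)] (fun z => z - 2) :=
    hd.hasFDerivAt.isBigO_sub.mono nhdsWithin_le_nhds
  have h2 := (isBigO_refl (fun z : ℝ => (z-2) ^ (-(1/2):ℝ)) (𝓝[>] (2:ℝ))).mul h1
  apply h2.congr' (EventuallyEq.refl _ _)
  filter_upwards [self_mem_nhdsWithin] with z hz
  have hs : (0:ℝ) < z - 2 := by simpa [Set.mem_Ioi] using hz
  have e := Real.rpow_add hs (-(1/2)) 1
  norm_num [Real.rpow_one] at e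
  exact e.symm

lemma linear_bigO : (fun z : ℝ => z - 2) =O[𝓝[>] (2:ℝ)] fun z => (z-2) ^ ((1/2):ℝ) := by
  rw [isBigO_iff]
  refine ⟨1, ?_⟩
  filter_upwards [Ioo_mem_nhdsGT_of_mem (⟨le_refl _, by norm_num⟩ : (2:ℝ) ∈ Set.Ico 2 3)] with z hz
  have h1 : (0:ℝ) < z - 2 := by linarith [hz.1]
  have h2 : z - 2 ≤ 1 := by linarith [hz.2]
  have h3 : (z-2) ^ ((1/2):ℝ) ≤ 1 := Real.rpow_le_one h1.le h2 (by norm_num)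
  have h4 : (0:ℝ) < (z-2) ^ ((1/2):ℝ) := Real.rpow_pos_of_pos h1 _
  have h5 : z - 2 = ((z-2) ^ ((1/2):ℝ))^2 := by
    rw [← Real.rpow_natCast ((z-2) ^ ((1/2):ℝ)) 2, ← Real.rpow_mul h1.le]
    norm_num
  rw [Real.norm_eq_abs, Real.norm_eq_abs, abs_of_pos h1, one_mul, abs_of_pos h4]
  nlinarith

lemma ev_facts : ∀ᶠ z : ℝ in 𝓝[>] (2:ℝ),
    (0 < z - 2 ∧ (z-2:ℝ)^(-(1/2):ℝ) = (Real.sqrt (z-2))⁻¹ ∧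
      Real.sqrt (z^2-2*z) = Real.sqrt z * Real.sqrt (z-2)) := by
  filter_upwards [self_mem_nhdsWithin] with z hz
  have hs : (0:ℝ) < z - 2 := by simpa [Set.mem_Ioi] using hz
  have hz0 : (0:ℝ) < z := by linarith
  refine ⟨hs, ?_, ?_⟩
  · rw [Real.rpow_neg hs.le, Real.sqrt_eq_rpow]
  · rw [show z^2-2*z = z*(z-2) by ring, Real.sqrt_mul hz0.le]

end Aux

/-- As `z → 2⁺`, with `C₁ = 1/√2`:
`a(z) − C₁ (z−2)^{−1/2} = O((z−2)^{1/2})`,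
`b(z) − C₁ (z−2)^{−1/2} + 1 = O((z−2)^{1/2})`, and
`c(z) − C₁ (z−2)^{−1/2} + 1 = O((z−2)^{1/2})`. -/
theorem abc_asymptotics_right_of_two :
    (fun z : ℝ => aF z - (Real.sqrt 2)⁻¹ * (z - 2) ^ (-(1/2) : ℝ))
      =O[𝓝[>] (2:ℝ)] (fun z : ℝ => (z - 2) ^ ((1/2) : ℝ)) ∧
    (fun z : ℝ => bF z - (Real.sqrt 2)⁻¹ * (z - 2) ^ (-(1/2) : ℝ) + 1)
      =O[𝓝[>] (2:ℝ)] (fun z : ℝ => (z - 2) ^ ((1/2) : ℝ)) ∧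
    (fun z : ℝ => cF z - (Real.sqrt 2)⁻¹ * (z - 2) ^ (-(1/2) : ℝ) + 1)
      =O[𝓝[>] (2:ℝ)] (fun z : ℝ => (z - 2) ^ ((1/2) : ℝ)) := by
  have hsd : DifferentiableAt ℝ (fun z : ℝ => (Real.sqrt z)⁻¹) 2 := by
    apply DifferentiableAt.inv
    · exact differentiableAt_id.sqrt (by norm_num)
    · exact ne_of_gt (Real.sqrt_pos.2 (by norm_num))
  have hdA : DifferentiableAt ℝ (fun z : ℝ => (Real.sqrt z)⁻¹) 2 := hsd
  have hdB : DifferentiableAt ℝ (fun z : ℝ => (z-1) * (Real.sqrt z)⁻¹) 2 :=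
    ((differentiableAt_id.sub_const 1)).mul hsd
  have hdC : DifferentiableAt ℝ (fun z : ℝ => (z-1)^2 * (Real.sqrt z)⁻¹) 2 :=
    (((differentiableAt_id.sub_const 1)).pow 2).mul hsd
  refine ⟨?_, ?_, ?_⟩
  · apply (key _ hdA).congr' ?_ (EventuallyEq.refl _ _)
    filter_upwards [ev_facts] with z ⟨hs, e1, e2⟩
    have hz0 : (0:ℝ) < z := by linarith
    rw [aF_eq z (by linarith), e1, e2]
    ring
  · apply (key _ hdB).congr' ?_ (EventuallyEq.refl _ _)
    filter_upwards [ev_facts] with z ⟨hs, e1, e2⟩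
    have hz0 : (0:ℝ) < z := by linarith
    rw [bF_eq z (by linarith), e1, e2]
    ring
  · apply ((key _ hdC).sub linear_bigO).congr' ?_ (EventuallyEq.refl _ _)
    filter_upwards [ev_facts] with z ⟨hs, e1, e2⟩
    have hz0 : (0:ℝ) < z := by linarith
    rw [cF_eq z (by linarith), e1, e2]
    ring
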